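/- Combining the two integral identities, k[u] := ∫(Δu + κ|∇u|²/u)(Δu + (β−1)|∇u|²/u) dσ = ∫ q[u] dσ + d∫|∇u|² dσ, where q[u] = (d/(d−1))(a‖Lu‖² − 2b Lu:Mu + c‖Mu‖²) with a = 1, b = (κ+β−1)(d−1)/(d+2), c = (κ+β−1)d/(d+2) + κ(β−1). -/
import Mathlib


set_option autoImplicit false

open MeasureTheory

/-- Combination of the two integral identities: with `lap = Δu`, `w = |∇u|²/u`,
`k[u] = ∫(Δu + κ|∇u|²/u)(Δu + (β−1)|∇u|²/u) dσ = ∫ q[u] dσ + d∫|∇u|² dσ`, where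
`q[u] = (d/(d−1))(a‖Lu‖² − 2b Lu:Mu + c‖Mu‖²)` and `a = 1`,
`b = (κ+β−1)(d−1)/(d+2)`, `c = (κ+β−1)d/(d+2) + κ(β−1)`.  The identities
`∫(Δu)² = (d/(d−1))∫‖Lu‖² + d∫|∇u|²`,
`∫Δu·|∇u|²/u = (d/(d+2))[(d/(d−1))∫‖Mu‖² − 2∫Lu:Mu]` and
`∫|∇u|⁴/u² = (d/(d−1))∫‖Mu‖²` are given as hypotheses. -/
theorem stmt_17 {Ω : Type*} [MeasurableSpace Ω] (σ : Measure Ω) [IsProbabilityMeasure σ]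
    (d : ℕ) (hd : 2 ≤ d) (κ β : ℝ)
    (lap w LnormSq MnormSq LM gradSq : Ω → ℝ)
    (hlap2 : Integrable (fun x => lap x ^ 2) σ)
    (hlapw : Integrable (fun x => lap x * w x) σ)
    (hw2 : Integrable (fun x => w x ^ 2) σ)
    (hL : Integrable LnormSq σ) (hM : Integrable MnormSq σ)
    (hLM : Integrable LM σ) (hg : Integrable gradSq σ)
    (h1 : ∫ x, lap x ^ 2 ∂σ =
      (d / (d - 1) : ℝ) * ∫ x, LnormSq x ∂σ + d * ∫ x, gradSq x ∂σ)
    (h2 : ∫ x, lap x * w x ∂σ =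
      (d / (d + 2) : ℝ) * ((d / (d - 1) : ℝ) * ∫ x, MnormSq x ∂σ - 2 * ∫ x, LM x ∂σ))
    (h3 : ∫ x, w x ^ 2 ∂σ = (d / (d - 1) : ℝ) * ∫ x, MnormSq x ∂σ) :
    ∫ x, (lap x + κ * w x) * (lap x + (β - 1) * w x) ∂σ =
      (∫ x, (d / (d - 1) : ℝ) *
          (1 * LnormSq x - 2 * ((κ + β - 1) * (d - 1) / (d + 2)) * LM x
            + ((κ + β - 1) * d / (d + 2) + κ * (β - 1)) * MnormSq x) ∂σ)
        + d * ∫ x, gradSq x ∂σ := by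
  have hd1 : (d : ℝ) - 1 ≠ 0 := by
    have : (2 : ℝ) ≤ d := by exact_mod_cast hd
    linarith
  have hd2 : (d : ℝ) + 2 ≠ 0 := by positivity
  have hLHS : ∫ x, (lap x + κ * w x) * (lap x + (β - 1) * w x) ∂σ
      = ∫ x, lap x ^ 2 ∂σ + ((κ + β - 1) * ∫ x, lap x * w x ∂σ
        + κ * (β - 1) * ∫ x, w x ^ 2 ∂σ) := by
    calc ∫ x, (lap x + κ * w x) * (lap x + (β - 1) * w x) ∂σ
        = ∫ x, (lap x ^ 2 + ((κ + β - 1) * (lap x * w x)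
            + κ * (β - 1) * (w x ^ 2))) ∂σ := by
          congr 1; funext x; ring
      _ = ∫ x, lap x ^ 2 ∂σ + ∫ x, ((κ + β - 1) * (lap x * w x)
            + κ * (β - 1) * (w x ^ 2)) ∂σ :=
          integral_add hlap2 ((hlapw.const_mul _).add (hw2.const_mul _))
      _ = _ := by
          rw [integral_add (hlapw.const_mul _) (hw2.const_mul _),
            integral_const_mul, integral_const_mul]
  have hRHS : ∫ x, (d / (d - 1) : ℝ) *
        (1 * LnormSq x - 2 * ((κ + β - 1) * (d - 1) / (d + 2)) * LM x
          + ((κ + β - 1) * d / (d + 2) + κ * (β - 1)) * MnormSq x) ∂σ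
      = (d / (d - 1) : ℝ) * (∫ x, LnormSq x ∂σ
          - 2 * ((κ + β - 1) * (d - 1) / (d + 2)) * ∫ x, LM x ∂σ
          + ((κ + β - 1) * d / (d + 2) + κ * (β - 1)) * ∫ x, MnormSq x ∂σ) := by
    rw [integral_const_mul]
    congr 1
    simp only [one_mul]
    have e1 : ∫ x, (LnormSq x - 2 * ((κ + β - 1) * (d - 1) / (d + 2)) * LM x
          + ((κ + β - 1) * (d : ℝ) / (d + 2) + κ * (β - 1)) * MnormSq x) ∂σ
        = (∫ x, (LnormSq x - 2 * ((κ + β - 1) * (d - 1) / (d + 2)) * LM x) ∂σ)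
          + ∫ x, ((κ + β - 1) * (d : ℝ) / (d + 2) + κ * (β - 1)) * MnormSq x ∂σ :=
      integral_add (hL.sub (hLM.const_mul _)) (hM.const_mul _)
    have e2 : ∫ x, (LnormSq x - 2 * ((κ + β - 1) * ((d : ℝ) - 1) / (d + 2)) * LM x) ∂σ
        = (∫ x, LnormSq x ∂σ) - ∫ x, 2 * ((κ + β - 1) * ((d : ℝ) - 1) / (d + 2)) * LM x ∂σ :=
      integral_sub hL (hLM.const_mul _)
    rw [e1, e2, integral_const_mul, integral_const_mul]
  rw [hLHS, hRHS, h1, h2, h3]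
  field_simp
  ring
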